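/- Fix q₀ ∈ U such that K(q₀) is invertible. Then the real directional derivative of the first component z¹ of z at q₀ along the first real coordinate direction e₁ ∈ ℂ^m (i.e. ∂z¹/∂x¹) vanishes if and only if the determinant of the m×m matrix obtained from K(q₀) by replacing its first column with the vector (1, M(z(q₀))_{1,2}, …, M(z(q₀))_{1,m})ᵀ is zero. -/

import Mathlib

open Matrix

theorem orthogonal_reduction_iff_det_vanishes
    /- Invariance of `z¹` along the first real coordinate direction `e₁`
       is equivalent to the vanishing of `det K(q₀)` with first column
       replaced by `(1, M(z(q₀))₁₂, …, M(z(q₀))₁ₘ)ᵀ`. -/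
    (m : ℕ) (hm : 2 ≤ m)
    (V : Set (Fin m → ℂ)) (hV : IsOpen V)
    (M : (Fin m → ℂ) → Matrix (Fin m) (Fin m) ℂ)
    (hM : ∀ i j, DifferentiableOn ℂ (fun ζ => M ζ i j) V)
    (hManti : ∀ ζ ∈ V, (M ζ)ᵀ = -(M ζ))
    (h : (Fin m → ℂ) → (Fin m → ℂ))
    (hh : ∀ i, DifferentiableOn ℂ (fun ζ => h ζ i) V)
    (F : (Fin m → ℂ) → (Fin m → ℂ) → (Fin m → ℂ))
    (hF : ∀ q ζ, F q ζ =
      fun i => q i - (∑ j, M ζ i j * (starRingEnd ℂ) (q j)) - h ζ i)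
    (U : Set (Fin m → ℂ)) (hU : IsOpen U)
    (z : (Fin m → ℂ) → (Fin m → ℂ))
    (hzV : ∀ q ∈ U, z q ∈ V)
    (hzF : ∀ q ∈ U, F q (z q) = 0)
    (hzdiff : DifferentiableOn ℝ z U)
    (K : (Fin m → ℂ) → Matrix (Fin m) (Fin m) ℂ)
    (hK : ∀ q ∈ U, ∀ i j, K q i j =
      fderiv ℂ (fun ζ => F q ζ i) (z q) (Pi.single j 1))
    (q₀ : Fin m → ℂ) (hq₀ : q₀ ∈ U)
    (hKinv : IsUnit (K q₀).det) :
    fderiv ℝ (fun q => z q (⟨0, by omega⟩ : Fin m)) q₀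
        (Pi.single (⟨0, by omega⟩ : Fin m) 1) = 0 ↔
      (Matrix.updateCol (K q₀) (⟨0, by omega⟩ : Fin m)
        (fun i => if i = (⟨0, by omega⟩ : Fin m) then 1
          else M (z q₀) (⟨0, by omega⟩ : Fin m) i)).det = 0 := by
  classical
  have hm0 : 0 < m := by omega
  set e0 : Fin m := ⟨0, hm0⟩ with he0
  have hζ₀ : z q₀ ∈ V := hzV q₀ hq₀
  have hzAt : DifferentiableAt ℝ z q₀ :=
    (hzdiff q₀ hq₀).differentiableAt (hU.mem_nhds hq₀)
  set Dz : (Fin m → ℂ) →L[ℝ] (Fin m → ℂ) := fderiv ℝ z q₀ with hDzdef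
  have hDz : HasFDerivAt z Dz q₀ := hzAt.hasFDerivAt
  set v : Fin m → ℂ := Pi.single e0 1 with hv
  set w : Fin m → ℂ := Dz v with hw
  have hMAt : ∀ i j, DifferentiableAt ℂ (fun ζ => M ζ i j) (z q₀) := fun i j =>
    (hM i j (z q₀) hζ₀).differentiableAt (hV.mem_nhds hζ₀)
  have hhAt : ∀ i, DifferentiableAt ℂ (fun ζ => h ζ i) (z q₀) := fun i =>
    (hh i (z q₀) hζ₀).differentiableAt (hV.mem_nhds hζ₀)
  set dM : Fin m → Fin m → ((Fin m → ℂ) →L[ℂ] ℂ) :=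
    fun i j => fderiv ℂ (fun ζ => M ζ i j) (z q₀) with hdM
  set dh : Fin m → ((Fin m → ℂ) →L[ℂ] ℂ) :=
    fun i => fderiv ℂ (fun ζ => h ζ i) (z q₀) with hdh
  -- Step 1: the complex derivative of `ζ ↦ F q₀ ζ i`
  have hL : ∀ i, HasFDerivAt (fun ζ => F q₀ ζ i)
      ((0 : (Fin m → ℂ) →L[ℂ] ℂ) - ∑ j, (starRingEnd ℂ) (q₀ j) • dM i j - dh i) (z q₀) := by
    intro i
    have h1 : HasFDerivAt (fun _ : Fin m → ℂ => q₀ i) (0 : (Fin m → ℂ) →L[ℂ] ℂ) (z q₀) :=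
      hasFDerivAt_const _ _
    have h2 : HasFDerivAt (fun ζ => ∑ j, M ζ i j * (starRingEnd ℂ) (q₀ j))
        (∑ j, (starRingEnd ℂ) (q₀ j) • dM i j) (z q₀) :=
      HasFDerivAt.fun_sum fun j _ => (hMAt i j).hasFDerivAt.mul_const _
    have h3 : HasFDerivAt (fun ζ => h ζ i) (dh i) (z q₀) := (hhAt i).hasFDerivAt
    have := (h1.sub h2).sub h3
    have heq : (fun ζ => F q₀ ζ i) =
        fun ζ => q₀ i - (∑ j, M ζ i j * (starRingEnd ℂ) (q₀ j)) - h ζ i := by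
      funext ζ; rw [hF]
    rw [heq]
    exact this
  -- Step 2: `K q₀ *ᵥ w` computed from the complex derivative
  have hKval : ∀ i j, K q₀ i j =
      ((0 : (Fin m → ℂ) →L[ℂ] ℂ) - ∑ j', (starRingEnd ℂ) (q₀ j') • dM i j' - dh i)
        (Pi.single j 1) := by
    intro i j
    rw [hK q₀ hq₀ i j, (hL i).fderiv]
  have hKw : ∀ i, ∑ j, K q₀ i j * w j =
      -(∑ j, (starRingEnd ℂ) (q₀ j) * dM i j w) - dh i w := by
    intro i
    set L : (Fin m → ℂ) →L[ℂ] ℂ :=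
      (0 : (Fin m → ℂ) →L[ℂ] ℂ) - ∑ j', (starRingEnd ℂ) (q₀ j') • dM i j' - dh i with hLdef
    have hwsum : w = ∑ j, w j • (Pi.single j (1 : ℂ) : Fin m → ℂ) := by
      funext k
      simp [Finset.sum_apply, Pi.single_apply]
    have hLw : ∑ j, K q₀ i j * w j = L w := by
      calc ∑ j, K q₀ i j * w j = ∑ j, w j • L (Pi.single j 1) := by
            simp only [hKval i, smul_eq_mul]
            exact Finset.sum_congr rfl fun j _ => mul_comm _ _
        _ = L (∑ j, w j • (Pi.single j (1 : ℂ) : Fin m → ℂ)) := by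
            rw [map_sum]
            exact Finset.sum_congr rfl fun j _ => (map_smul L _ _).symm
        _ = L w := by rw [← hwsum]
    rw [hLw, hLdef]
    simp [ContinuousLinearMap.sub_apply, ContinuousLinearMap.sum_apply,
      ContinuousLinearMap.smul_apply, smul_eq_mul]
  -- Step 3: the real derivative of `q ↦ F q (z q) i` vanishes; extract the equation
  have hmain : ∀ i, v i - (∑ j, (M (z q₀) i j * (starRingEnd ℂ) (v j)
      + (starRingEnd ℂ) (q₀ j) * dM i j w)) - dh i w = 0 := by
    intro i
    set conjL : ℂ →L[ℝ] ℂ := Complex.conjCLE.toContinuousLinearMap with hconjL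
    have h1 : HasFDerivAt (fun q : Fin m → ℂ => q i)
        (ContinuousLinearMap.proj i : (Fin m → ℂ) →L[ℝ] ℂ) q₀ := hasFDerivAt_apply i q₀
    have h3 : ∀ j, HasFDerivAt (fun q : Fin m → ℂ => (starRingEnd ℂ) (q j))
        (conjL.comp (ContinuousLinearMap.proj j)) q₀ := by
      intro j
      exact conjL.hasFDerivAt.comp q₀ (hasFDerivAt_apply j q₀)
    have h2 : ∀ j, HasFDerivAt (fun q => M (z q) i j)
        (((dM i j).restrictScalars ℝ).comp Dz) q₀ := by
      intro j
      exact ((hMAt i j).hasFDerivAt.restrictScalars ℝ).comp q₀ hDz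
    have h4 : ∀ j, HasFDerivAt (fun q => M (z q) i j * (starRingEnd ℂ) (q j))
        (M (z q₀) i j • (conjL.comp (ContinuousLinearMap.proj j))
          + (starRingEnd ℂ) (q₀ j) • (((dM i j).restrictScalars ℝ).comp Dz)) q₀ :=
      fun j => (h2 j).mul (h3 j)
    have h5 : HasFDerivAt (fun q => ∑ j, M (z q) i j * (starRingEnd ℂ) (q j))
        (∑ j, (M (z q₀) i j • (conjL.comp (ContinuousLinearMap.proj j))
          + (starRingEnd ℂ) (q₀ j) • (((dM i j).restrictScalars ℝ).comp Dz))) q₀ :=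
      HasFDerivAt.fun_sum fun j _ => h4 j
    have h6 : HasFDerivAt (fun q => h (z q) i) (((dh i).restrictScalars ℝ).comp Dz) q₀ :=
      ((hhAt i).hasFDerivAt.restrictScalars ℝ).comp q₀ hDz
    have h7 := (h1.sub h5).sub h6
    have h8 : HasFDerivAt (fun q => F q (z q) i)
        ((ContinuousLinearMap.proj i : (Fin m → ℂ) →L[ℝ] ℂ)
          - (∑ j, (M (z q₀) i j • (conjL.comp (ContinuousLinearMap.proj j))
            + (starRingEnd ℂ) (q₀ j) • (((dM i j).restrictScalars ℝ).comp Dz)))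
          - ((dh i).restrictScalars ℝ).comp Dz) q₀ := by
      have heq : (fun q => F q (z q) i) =
          fun q => q i - (∑ j, M (z q) i j * (starRingEnd ℂ) (q j)) - h (z q) i := by
        funext q; rw [hF]
      rw [heq]; exact h7
    have h9 : HasFDerivAt (fun q => F q (z q) i)
        (0 : (Fin m → ℂ) →L[ℝ] ℂ) q₀ := by
      refine (hasFDerivAt_const (0 : ℂ) q₀).congr_of_eventuallyEq ?_
      filter_upwards [hU.mem_nhds hq₀] with q hq
      rw [hzF q hq]; rfl
    have h10 := h8.unique h9
    have h11 := congrArg (fun T : (Fin m → ℂ) →L[ℝ] ℂ => T v) h10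
    simpa [ContinuousLinearMap.sub_apply, ContinuousLinearMap.sum_apply,
      ContinuousLinearMap.add_apply, ContinuousLinearMap.smul_apply,
      ContinuousLinearMap.comp_apply, ContinuousLinearMap.proj_apply,
      ContinuousLinearMap.coe_restrictScalars', smul_eq_mul, hconjL, hw] using h11
  -- Step 4: combine
  have hmulvec : ∀ i, ∑ j, K q₀ i j * w j
      = M (z q₀) i e0 - (if i = e0 then 1 else 0) := by
    intro i
    have h1 : v i = if i = e0 then 1 else 0 := by
      simp [hv, Pi.single_apply, eq_comm]
    have h2 : ∑ j, M (z q₀) i j * (starRingEnd ℂ) (v j) = M (z q₀) i e0 := by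
      rw [hv]
      simp [Pi.single_apply, apply_ite (starRingEnd ℂ), mul_ite, Finset.sum_ite_eq']
    have h3 := hmain i
    rw [Finset.sum_add_distrib, h1, h2] at h3
    rw [hKw i]
    ring_nf
    ring_nf at h3
    linear_combination h3
  -- Step 5: Cramer's rule
  set c : Fin m → ℂ := fun i => if i = e0 then 1 else M (z q₀) e0 i with hc
  have hanti := hManti (z q₀) hζ₀
  have hMvec : K q₀ *ᵥ w = -c := by
    funext i
    have hi : (K q₀ *ᵥ w) i = ∑ j, K q₀ i j * w j := by
      simp [Matrix.mulVec, dotProduct]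
    rw [hi, hmulvec i]
    by_cases hie : i = e0
    · rw [hie]
      have h00 : M (z q₀) e0 e0 = -(M (z q₀) e0 e0) := by
        have := congrFun (congrFun hanti e0) e0
        simpa [Matrix.transpose_apply] using this
      have h0 : M (z q₀) e0 e0 = 0 := by linear_combination (1/2 : ℂ) * h00
      simp [hc, h0]
    · have hMie : M (z q₀) i e0 = -(M (z q₀) e0 i) := by
        have := congrFun (congrFun hanti e0) i
        simpa [Matrix.transpose_apply] using this
      simp [hc, hie, hMie]
  have hsmul : (K q₀).det • w = -(cramer (K q₀) c) := by
    have h1 : (K q₀).adjugate *ᵥ (K q₀ *ᵥ w) = (K q₀).det • w := by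
      rw [mulVec_mulVec, adjugate_mul, smul_mulVec, one_mulVec]
    rw [← h1, hMvec, mulVec_neg, cramer_eq_adjugate_mulVec]
  have hdet0 : (K q₀).det * w e0 = -((updateCol (K q₀) e0 c).det) := by
    have := congrFun hsmul e0
    simpa [Pi.smul_apply, smul_eq_mul, cramer_apply] using this
  have hproj : fderiv ℝ (fun q => z q e0) q₀ v = w e0 := by
    have hcomp : HasFDerivAt (fun q => z q e0)
        ((ContinuousLinearMap.proj e0 : (Fin m → ℂ) →L[ℝ] ℂ).comp Dz) q₀ :=
      by have := (hasFDerivAt_apply e0 (z q₀)).comp q₀ hDz; exact this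
    rw [hcomp.fderiv]
    rfl
  show fderiv ℝ (fun q => z q e0) q₀ v = 0 ↔ (updateCol (K q₀) e0 c).det = 0
  rw [hproj]
  constructor
  · intro h0
    rw [h0, mul_zero] at hdet0
    exact neg_eq_zero.mp hdet0.symm
  · intro h0
    rw [h0, neg_zero, mul_eq_zero] at hdet0
    exact hdet0.resolve_left hKinv.ne_zero
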